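/- Let J ∈ ℕ, and for each ℓ = 1,…,J let ζ^{(ℓ)} : ℤ → ℝ be absolutely summable. Let c^{(J)} : ℤ → ℝ be a bounded sequence with Δc^{(J)} < ∞, and define recursively c^{(ℓ−1)} = D_{ζ^{(ℓ)}} c^{(ℓ)} for ℓ = J, J−1, …, 1. Then for every ℓ ∈ {0,1,…,J}, Δc^{(ℓ)} ≤ 2^{J−ℓ} · (∏_{m=ℓ+1}^{J} ‖ζ^{(m)}‖₁) · Δc^{(J)}, where ‖ζ‖₁ = Σ_{i∈ℤ}|ζ_i|. -/

import Mathlib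

noncomputable section

/-- Sup norm of a bi-infinite real sequence. -/
def supNorm (c : ℤ → ℝ) : ℝ := ⨆ j, |c j|

/-- Supremum of absolute first differences. -/
def deltaSup (c : ℤ → ℝ) : ℝ := ⨆ j, |c (j + 1) - c j|

/-- ℓ¹ norm of a sequence. -/
def l1Norm (a : ℤ → ℝ) : ℝ := ∑' i, |a i|

/-- The constant K_a = 2 Σ |a_i|·|i|. -/
def Kc (a : ℤ → ℝ) : ℝ := 2 * ∑' i : ℤ, |a i| * |(i : ℝ)|

/-- Subdivision operator (S_α c)_j = Σ_i α_{j-2i} c_i. -/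
def subdiv (α c : ℤ → ℝ) : ℤ → ℝ := fun j => ∑' i, α (j - 2 * i) * c i

/-- Decimation operator (D_ζ c)_j = Σ_i ζ_{j-i} c_{2i}. -/
def decim (ζ c : ℤ → ℝ) : ℤ → ℝ := fun j => ∑' i, ζ (j - i) * c (2 * i)

lemma abs_tsum_le' {f : ℤ → ℝ} (hf : Summable fun i => |f i|) :
    |∑' i, f i| ≤ ∑' i, |f i| := by
  simpa using norm_tsum_le_tsum_norm (f := f) (by simpa using hf)

lemma summable_shift {ζ : ℤ → ℝ} (hζ : Summable fun i => |ζ i|) (j : ℤ) :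
    Summable fun i : ℤ => |ζ (j - i)| := by
  have := hζ.comp_injective (Equiv.subLeft j).injective
  exact this

lemma tsum_shift {ζ : ℤ → ℝ} (j : ℤ) :
    ∑' i : ℤ, |ζ (j - i)| = l1Norm ζ :=
  (Equiv.subLeft j).tsum_eq (fun i => |ζ i|)

lemma summable_decim_aux {ζ c : ℤ → ℝ} (hζ : Summable fun i => |ζ i|) {M : ℝ}
    (hc : ∀ j, |c j| ≤ M) (j : ℤ) (g : ℤ → ℤ) :
    Summable fun i : ℤ => ζ (j - i) * c (g i) := by
  apply Summable.of_abs
  refine Summable.of_nonneg_of_le (fun i => abs_nonneg _) (fun i => ?_)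
    ((summable_shift hζ j).mul_right M)
  rw [abs_mul]
  exact mul_le_mul_of_nonneg_left (hc _) (abs_nonneg _)

lemma decim_bdd {ζ c : ℤ → ℝ} (hζ : Summable fun i => |ζ i|) {M : ℝ}
    (hc : ∀ j, |c j| ≤ M) (j : ℤ) : |decim ζ c j| ≤ l1Norm ζ * M := by
  have hs : Summable fun i : ℤ => |ζ (j - i)| := summable_shift hζ j
  have hsum : Summable fun i : ℤ => ζ (j - i) * c (2 * i) :=
    summable_decim_aux hζ hc j _
  calc |decim ζ c j| ≤ ∑' i : ℤ, |ζ (j - i) * c (2 * i)| :=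
        abs_tsum_le' (f := fun i : ℤ => ζ (j - i) * c (2 * i)) hsum.abs
    _ ≤ ∑' i : ℤ, |ζ (j - i)| * M := by
        apply Summable.tsum_le_tsum _ hsum.abs (hs.mul_right M)
        intro i
        rw [abs_mul]
        exact mul_le_mul_of_nonneg_left (hc _) (abs_nonneg _)
    _ = l1Norm ζ * M := by rw [tsum_mul_right, tsum_shift]

lemma decim_delta {ζ c : ℤ → ℝ} (hζ : Summable fun i => |ζ i|) {M : ℝ}
    (hc : ∀ j, |c j| ≤ M) :
    deltaSup (decim ζ c) ≤ 2 * l1Norm ζ * deltaSup c := by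
  have hbdd : BddAbove (Set.range fun j : ℤ => |c (j + 1) - c j|) := by
    refine ⟨2 * M, ?_⟩
    rintro x ⟨k, rfl⟩
    calc |c (k + 1) - c k| ≤ |c (k + 1)| + |c k| := abs_sub _ _
      _ ≤ M + M := add_le_add (hc _) (hc _)
      _ = 2 * M := by ring
  have hΔ : ∀ k : ℤ, |c (k + 1) - c k| ≤ deltaSup c :=
    fun k => le_ciSup hbdd k
  have hΔnn : 0 ≤ deltaSup c := Real.iSup_nonneg fun k => abs_nonneg _
  apply ciSup_le
  intro j
  have hs : Summable fun i : ℤ => |ζ (j - i)| := summable_shift hζ j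
  have hsum1 : Summable fun i : ℤ => ζ (j - i) * c (2 * i + 2) := by
    have := summable_decim_aux hζ hc j (fun i => 2 * i + 2)
    simpa using this
  have hsum2 : Summable fun i : ℤ => ζ (j - i) * c (2 * i) :=
    summable_decim_aux hζ hc j _
  have key : decim ζ c (j + 1) = ∑' i : ℤ, ζ (j - i) * c (2 * i + 2) := by
    have := (Equiv.addRight (1 : ℤ)).tsum_eq (fun i => ζ (j + 1 - i) * c (2 * i))
    rw [show decim ζ c (j + 1) = ∑' i : ℤ, ζ (j + 1 - i) * c (2 * i) from rfl, ← this]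
    apply tsum_congr
    intro k
    simp only [Equiv.coe_addRight]
    ring_nf
  have hdiff : decim ζ c (j + 1) - decim ζ c j
      = ∑' i : ℤ, ζ (j - i) * (c (2 * i + 2) - c (2 * i)) := by
    rw [key, show decim ζ c j = ∑' i : ℤ, ζ (j - i) * c (2 * i) from rfl,
      ← Summable.tsum_sub hsum1 hsum2]
    apply tsum_congr
    intro k
    ring
  rw [hdiff]
  have hsumd : Summable fun i : ℤ => ζ (j - i) * (c (2 * i + 2) - c (2 * i)) := by
    simpa [mul_sub] using hsum1.sub hsum2
  have hterm : ∀ i : ℤ, |ζ (j - i) * (c (2 * i + 2) - c (2 * i))|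
      ≤ |ζ (j - i)| * (2 * deltaSup c) := by
    intro i
    rw [abs_mul]
    apply mul_le_mul_of_nonneg_left _ (abs_nonneg _)
    calc |c (2 * i + 2) - c (2 * i)|
        ≤ |c (2 * i + 1 + 1) - c (2 * i + 1)| + |c (2 * i + 1) - c (2 * i)| := by
          rw [show (2 * i + 2 : ℤ) = 2 * i + 1 + 1 by ring]
          exact abs_sub_le _ _ _
      _ ≤ deltaSup c + deltaSup c := add_le_add (hΔ _) (hΔ _)
      _ = 2 * deltaSup c := by ring
  calc |∑' i : ℤ, ζ (j - i) * (c (2 * i + 2) - c (2 * i))|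
      ≤ ∑' i : ℤ, |ζ (j - i) * (c (2 * i + 2) - c (2 * i))| :=
        abs_tsum_le' (f := fun i : ℤ => ζ (j - i) * (c (2 * i + 2) - c (2 * i))) hsumd.abs
    _ ≤ ∑' i : ℤ, |ζ (j - i)| * (2 * deltaSup c) :=
        Summable.tsum_le_tsum hterm hsumd.abs (hs.mul_right _)
    _ = l1Norm ζ * (2 * deltaSup c) := by rw [tsum_mul_right, tsum_shift]
    _ = 2 * l1Norm ζ * deltaSup c := by ring

/-- Recursive bound on first differences across the pyramid levels. -/
theorem deltaSup_pyramid_levels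
    (J : ℕ)
    (ζ : ℕ → ℤ → ℝ)
    (hζ_sum : ∀ ℓ : ℕ, 1 ≤ ℓ → ℓ ≤ J → Summable (fun i => |ζ ℓ i|))
    (c : ℕ → ℤ → ℝ)
    (hc_bdd : ∃ M : ℝ, ∀ j : ℤ, |c J j| ≤ M)
    (hΔcJ : BddAbove (Set.range fun j : ℤ => |c J (j + 1) - c J j|))
    (hrec : ∀ ℓ : ℕ, 1 ≤ ℓ → ℓ ≤ J → c (ℓ - 1) = decim (ζ ℓ) (c ℓ)) :
    ∀ ℓ : ℕ, ℓ ≤ J →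
      deltaSup (c ℓ) ≤
        2 ^ (J - ℓ) * (∏ m ∈ Finset.Icc (ℓ + 1) J, l1Norm (ζ m)) * deltaSup (c J) := by
  have hbddAll : ∀ d ℓ : ℕ, ℓ + d = J → ∃ M : ℝ, ∀ j : ℤ, |c ℓ j| ≤ M := by
    intro d
    induction d with
    | zero =>
      intro ℓ h
      have : ℓ = J := by omega
      subst this
      exact hc_bdd
    | succ d ih =>
      intro ℓ h
      obtain ⟨M, hM⟩ := ih (ℓ + 1) (by omega)
      have hrec' : c ℓ = decim (ζ (ℓ + 1)) (c (ℓ + 1)) := hrec (ℓ + 1) (by omega) (by omega)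
      refine ⟨l1Norm (ζ (ℓ + 1)) * M, ?_⟩
      intro j
      rw [hrec']
      exact decim_bdd (hζ_sum (ℓ + 1) (by omega) (by omega)) hM j
  suffices H : ∀ d ℓ : ℕ, ℓ + d = J →
      deltaSup (c ℓ) ≤
        2 ^ (J - ℓ) * (∏ m ∈ Finset.Icc (ℓ + 1) J, l1Norm (ζ m)) * deltaSup (c J) by
    intro ℓ hℓ
    exact H (J - ℓ) ℓ (by omega)
  intro d
  induction d with
  | zero =>
    intro ℓ h
    have : ℓ = J := by omega
    subst this
    rw [Finset.Icc_eq_empty (by omega)]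
    simp
  | succ d ih =>
    intro ℓ h
    obtain ⟨M, hM⟩ := hbddAll d (ℓ + 1) (by omega)
    have hz := hζ_sum (ℓ + 1) (by omega) (by omega)
    have hrec' : c ℓ = decim (ζ (ℓ + 1)) (c (ℓ + 1)) := hrec (ℓ + 1) (by omega) (by omega)
    have step : deltaSup (c ℓ) ≤ 2 * l1Norm (ζ (ℓ + 1)) * deltaSup (c (ℓ + 1)) := by
      rw [hrec']
      exact decim_delta hz hM
    have ihl := ih (ℓ + 1) (by omega)
    have h1 : (0:ℝ) ≤ l1Norm (ζ (ℓ + 1)) := tsum_nonneg fun i => abs_nonneg _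
    have hprod : ∏ m ∈ Finset.Icc (ℓ + 1) J, l1Norm (ζ m)
        = l1Norm (ζ (ℓ + 1)) * ∏ m ∈ Finset.Icc (ℓ + 2) J, l1Norm (ζ m) := by
      rw [← Finset.insert_Icc_add_one_left_eq_Icc (by omega), Finset.prod_insert (by simp)]
      rfl
    calc deltaSup (c ℓ) ≤ 2 * l1Norm (ζ (ℓ + 1)) * deltaSup (c (ℓ + 1)) := step
      _ ≤ 2 * l1Norm (ζ (ℓ + 1)) *
          (2 ^ (J - (ℓ + 1)) * (∏ m ∈ Finset.Icc (ℓ + 1 + 1) J, l1Norm (ζ m)) * deltaSup (c J)) :=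
        mul_le_mul_of_nonneg_left ihl (by positivity)
      _ = 2 ^ (J - ℓ) * (∏ m ∈ Finset.Icc (ℓ + 1) J, l1Norm (ζ m)) * deltaSup (c J) := by
        rw [show J - ℓ = (J - (ℓ + 1)) + 1 by omega, hprod, pow_succ]
        ring_nf
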